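/- Let S be a nonempty finite set, T : S → S → ℝ a row-stochastic matrix, and Π := lim_{t→∞} (1/t) Σ_{k=0}^{t-1} T^k its limiting matrix. Then the matrix I − T + Π is nonsingular (invertible). -/

import Mathlib

open Filter Topology Matrix

section aux

variable {S : Type*} [Fintype S] [DecidableEq S]

private lemma sum_mulVec' {ι : Type*} (s : Finset ι) (f : ι → Matrix S S ℝ) (v : S → ℝ) :
    (∑ k ∈ s, f k) *ᵥ v = ∑ k ∈ s, (f k) *ᵥ v := by
  induction s using Finset.cons_induction with
  | empty => simp [Matrix.mulVec]
  | cons a s ha ih => simp [Finset.sum_cons, Matrix.add_mulVec, ih]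

private lemma pow_nonneg_entry (T : Matrix S S ℝ) (hnn : ∀ s s', 0 ≤ T s s') :
    ∀ k s s', 0 ≤ (T ^ k) s s' := by
  intro k
  induction k with
  | zero =>
    intro s s'
    by_cases h : s = s' <;> simp [pow_zero, Matrix.one_apply, h]
  | succ n ih =>
    intro s s'
    rw [pow_succ, Matrix.mul_apply]
    exact Finset.sum_nonneg fun j _ => mul_nonneg (ih s j) (hnn j s')

private lemma pow_row_sum (T : Matrix S S ℝ) (hrow : ∀ s, ∑ s', T s s' = 1) :
    ∀ k s, ∑ s', (T ^ k) s s' = 1 := by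
  intro k
  induction k with
  | zero => intro s; simp [Matrix.one_apply]
  | succ n ih =>
    intro s
    simp only [pow_succ, Matrix.mul_apply]
    rw [Finset.sum_comm]
    calc ∑ j, ∑ s', (T ^ n) s j * T j s'
        = ∑ j, (T ^ n) s j * ∑ s', T j s' := by simp [Finset.mul_sum]
      _ = 1 := by simp [hrow, ih]

end aux

/-- **The fundamental matrix exists.**
If `P` is the entrywise Cesaro limit of the powers of a row-stochastic matrix `T`, then
`I - T + P` is nonsingular (invertible). -/
theorem fundamental_matrix_invertible {S : Type*} [Fintype S] [Nonempty S] [DecidableEq S]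
    (T P : Matrix S S ℝ)
    (hnn : ∀ s s', 0 ≤ T s s') (hrow : ∀ s, ∑ s', T s s' = 1)
    (hP : ∀ s s' : S,
      Tendsto (fun t : ℕ => (t : ℝ)⁻¹ * ∑ k ∈ Finset.range t, (T ^ k) s s')
        atTop (nhds (P s s'))) :
    IsUnit (1 - T + P) := by
  -- The Cesàro averages
  set A : ℕ → Matrix S S ℝ := fun t => (t : ℝ)⁻¹ • ∑ k ∈ Finset.range t, T ^ k with hAdef
  have hA : Tendsto A atTop (𝓝 P) := by
    refine tendsto_pi_nhds.mpr ?_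
    intro s
    rw [tendsto_pi_nhds]
    intro s'
    have := hP s s'
    convert this using 2 with t
    simp [hAdef, Matrix.smul_apply, Matrix.sum_apply, smul_eq_mul]
  -- entries of powers bounded by 1
  have hpow_le : ∀ k s s', (T ^ k) s s' ≤ 1 := by
    intro k s s'
    calc (T ^ k) s s' ≤ ∑ j, (T ^ k) s j :=
          Finset.single_le_sum (fun j _ => pow_nonneg_entry T hnn k s j) (Finset.mem_univ s')
      _ = 1 := pow_row_sum T hrow k s
  -- the error term tends to 0
  have hzero : Tendsto (fun t : ℕ => (t : ℝ)⁻¹ • (T ^ t - 1)) atTop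
      (𝓝 (0 : Matrix S S ℝ)) := by
    refine tendsto_pi_nhds.mpr ?_
    intro s
    rw [tendsto_pi_nhds]
    intro s'
    simp only [Matrix.smul_apply, Matrix.sub_apply, Matrix.zero_apply, smul_eq_mul]
    apply squeeze_zero_norm (a := fun t : ℕ => (t : ℝ)⁻¹)
    · intro t
      rw [norm_mul, Real.norm_eq_abs, Real.norm_eq_abs,
        abs_of_nonneg (show (0:ℝ) ≤ (t:ℝ)⁻¹ by positivity)]
      have hb : |(T ^ t) s s' - (1 : Matrix S S ℝ) s s'| ≤ 1 := by
        have h0 : (0:ℝ) ≤ (1 : Matrix S S ℝ) s s' := by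
          by_cases h : s = s' <;> simp [Matrix.one_apply, h]
        have h1' : (1 : Matrix S S ℝ) s s' ≤ 1 := by
          by_cases h : s = s' <;> simp [Matrix.one_apply, h]
        have h2 := hpow_le t s s'
        have h3 := pow_nonneg_entry T hnn t s s'
        rw [abs_sub_le_iff]
        constructor <;> linarith
      calc (t:ℝ)⁻¹ * |(T ^ t) s s' - (1 : Matrix S S ℝ) s s'| ≤ (t:ℝ)⁻¹ * 1 :=
            mul_le_mul_of_nonneg_left hb (by positivity)
        _ = (t:ℝ)⁻¹ := mul_one _
    · exact tendsto_inv_atTop_zero.comp tendsto_natCast_atTop_atTop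
  -- key algebraic identities
  have hsum : ∀ t : ℕ, ∑ k ∈ Finset.range t, T ^ (k + 1) =
      (∑ k ∈ Finset.range t, T ^ k) + (T ^ t - 1) := by
    intro t
    have h1 := Finset.sum_range_succ' (fun k => T ^ k) t
    have h2 := Finset.sum_range_succ (fun k => T ^ k) t
    simp only [pow_zero] at h1
    have h3 := h1.symm.trans h2
    calc ∑ k ∈ Finset.range t, T ^ (k + 1)
        = ((∑ k ∈ Finset.range t, T ^ (k + 1)) + 1) - 1 := by abel
      _ = ((∑ k ∈ Finset.range t, T ^ k) + T ^ t) - 1 := by rw [h3]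
      _ = (∑ k ∈ Finset.range t, T ^ k) + (T ^ t - 1) := by abel
  have hTA : ∀ t : ℕ, T * A t = A t + (t : ℝ)⁻¹ • (T ^ t - 1) := by
    intro t
    rw [hAdef]
    dsimp only
    rw [Matrix.mul_smul, Finset.mul_sum, ← smul_add]
    congr 1
    calc ∑ k ∈ Finset.range t, T * T ^ k = ∑ k ∈ Finset.range t, T ^ (k + 1) :=
          Finset.sum_congr rfl fun k _ => (pow_succ' T k).symm
      _ = _ := hsum t
  have hAT : ∀ t : ℕ, A t * T = A t + (t : ℝ)⁻¹ • (T ^ t - 1) := by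
    intro t
    rw [hAdef]
    dsimp only
    rw [Matrix.smul_mul, Finset.sum_mul, ← smul_add]
    congr 1
    calc ∑ k ∈ Finset.range t, T ^ k * T = ∑ k ∈ Finset.range t, T ^ (k + 1) :=
          Finset.sum_congr rfl fun k _ => (pow_succ T k).symm
      _ = _ := hsum t
  have hRHS : Tendsto (fun t : ℕ => A t + (t : ℝ)⁻¹ • (T ^ t - 1)) atTop (𝓝 (P + 0)) :=
    hA.add hzero
  have hTP : T * P = P := by
    have h1 : Tendsto (fun t : ℕ => T * A t) atTop (𝓝 (T * P)) :=
      ((continuous_const.matrix_mul continuous_id).tendsto P).comp hA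
    simp only [hTA] at h1
    have := tendsto_nhds_unique h1 hRHS
    rwa [add_zero] at this
  have hPT : P * T = P := by
    have h1 : Tendsto (fun t : ℕ => A t * T) atTop (𝓝 (P * T)) :=
      ((continuous_id.matrix_mul continuous_const).tendsto P).comp hA
    simp only [hAT] at h1
    have := tendsto_nhds_unique h1 hRHS
    rwa [add_zero] at this
  have hPpow : ∀ k : ℕ, P * T ^ k = P := by
    intro k
    induction k with
    | zero => simp
    | succ n ih => rw [pow_succ, ← mul_assoc, ih, hPT]
  have hPA : ∀ t : ℕ, 1 ≤ t → P * A t = P := by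
    intro t ht
    have htne : (t : ℝ) ≠ 0 := by positivity
    rw [hAdef]
    dsimp only
    rw [Matrix.mul_smul, Finset.mul_sum]
    simp only [hPpow]
    rw [Finset.sum_const, Finset.card_range, ← Nat.cast_smul_eq_nsmul ℝ, smul_smul,
      inv_mul_cancel₀ htne, one_smul]
  have hPP : P * P = P := by
    have h1 : Tendsto (fun t : ℕ => P * A t) atTop (𝓝 (P * P)) :=
      ((continuous_const.matrix_mul continuous_id).tendsto P).comp hA
    have h2 : Tendsto (fun t : ℕ => P * A t) atTop (𝓝 P) := by
      apply Tendsto.congr' _ tendsto_const_nhds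
      filter_upwards [eventually_ge_atTop 1] with t ht
      exact (hPA t ht).symm
    exact tendsto_nhds_unique h1 h2
  -- invertibility via injectivity of mulVec
  rw [← Matrix.mulVec_injective_iff_isUnit]
  intro u w huw
  set v : S → ℝ := u - w with hvdef
  have hv : (1 - T + P) *ᵥ v = 0 := by
    rw [hvdef, Matrix.mulVec_sub, huw, sub_self]
  have h1 : P *ᵥ v = 0 := by
    have e : P * (1 - T + P) = P := by
      rw [mul_add, mul_sub, mul_one, hPT, hPP]
      abel
    calc P *ᵥ v = (P * (1 - T + P)) *ᵥ v := by rw [e]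
      _ = P *ᵥ ((1 - T + P) *ᵥ v) := (Matrix.mulVec_mulVec v P _).symm
      _ = P *ᵥ 0 := by rw [hv]
      _ = 0 := Matrix.mulVec_zero _
  have hTv : T *ᵥ v = v := by
    rw [Matrix.add_mulVec, Matrix.sub_mulVec, Matrix.one_mulVec, h1, add_zero,
      sub_eq_zero] at hv
    exact hv.symm
  have hpowv : ∀ k : ℕ, (T ^ k) *ᵥ v = v := by
    intro k
    induction k with
    | zero => simp [Matrix.one_mulVec]
    | succ n ih => rw [pow_succ', ← Matrix.mulVec_mulVec, ih, hTv]
  have hAv : ∀ t : ℕ, 1 ≤ t → A t *ᵥ v = v := by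
    intro t ht
    have htne : (t : ℝ) ≠ 0 := by positivity
    rw [hAdef]
    dsimp only
    rw [Matrix.smul_mulVec, sum_mulVec']
    simp only [hpowv]
    rw [Finset.sum_const, Finset.card_range, ← Nat.cast_smul_eq_nsmul ℝ, smul_smul,
      inv_mul_cancel₀ htne, one_smul]
  have hlim : Tendsto (fun t : ℕ => A t *ᵥ v) atTop (𝓝 (P *ᵥ v)) :=
    ((continuous_id.matrix_mulVec continuous_const).tendsto P).comp hA
  have h2 : Tendsto (fun t : ℕ => A t *ᵥ v) atTop (𝓝 v) := by
    apply Tendsto.congr' _ tendsto_const_nhds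
    filter_upwards [eventually_ge_atTop 1] with t ht
    exact (hAv t ht).symm
  have hPv : P *ᵥ v = v := tendsto_nhds_unique hlim h2
  have hv0 : v = 0 := by rw [← hPv, h1]
  rw [hvdef] at hv0
  exact sub_eq_zero.mp hv0
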